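/- With the general Loewner-LPV setup, for all 0 ≤ k, ℓ ≤ N with μ_k ≠ λ_ℓ, the (k+1, ℓ+1) entry of Â₀ := O·A₀·R equals -(μ_k·α_{k,ℓ} - λ_ℓ·β_{k,ℓ})/(μ_k - λ_ℓ), with α_{k,ℓ} = O_k A_{q^l_k} Φ(μ_k) A_{q^r_ℓ} R_ℓ and β_{k,ℓ} = O_k A_{q^l_k} Φ(λ_ℓ) A_{q^r_ℓ} R_ℓ. -/

import Mathlib

open Matrix

/-- The resolvent `Φ(z) = (zI - A₀)⁻¹`. -/
noncomputable def Phi {n : ℕ} (A₀ : Matrix (Fin n) (Fin n) ℂ) (z : ℂ) :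
    Matrix (Fin n) (Fin n) ℂ :=
  (z • (1 : Matrix (Fin n) (Fin n) ℂ) - A₀)⁻¹

/-- `loewnerOA A C μ ql k = C Φ(μ₀) A_{ql 1} Φ(μ₁) ⋯ Φ(μ_{k-1}) A_{ql k}`, so that the
`(k+1)`-st row of the generalized observability matrix is `loewnerOA … k * Φ(μ_k)`,
matching the recursion `O_{k+1} = O_k A_{q^l_k} Φ(μ_k)` with `O₁ = C Φ(μ₀)`. -/
noncomputable def loewnerOA {n np : ℕ} (A : Fin (np + 1) → Matrix (Fin n) (Fin n) ℂ)
    (C : Matrix (Fin 1) (Fin n) ℂ) (μ : ℕ → ℂ) (ql : ℕ → Fin np) :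
    ℕ → Matrix (Fin 1) (Fin n) ℂ
  | 0 => C
  | k + 1 => loewnerOA A C μ ql k * Phi (A 0) (μ k) * A (ql (k + 1)).succ

/-- `loewnerAR A B lam qr ℓ = A_{qr ℓ} Φ(λ_{ℓ-1}) ⋯ A_{qr 1} Φ(λ₀) B`, so that the
`(ℓ+1)`-st column of the generalized controllability matrix is `Φ(λ_ℓ) * loewnerAR … ℓ`,
matching the recursion `R_{ℓ+1} = Φ(λ_ℓ) A_{q^r_ℓ} R_ℓ` with `R₁ = Φ(λ₀) B`. -/
noncomputable def loewnerAR {n np : ℕ} (A : Fin (np + 1) → Matrix (Fin n) (Fin n) ℂ)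
    (B : Matrix (Fin n) (Fin 1) ℂ) (lam : ℕ → ℂ) (qr : ℕ → Fin np) :
    ℕ → Matrix (Fin n) (Fin 1) ℂ
  | 0 => B
  | l + 1 => A (qr (l + 1)).succ * Phi (A 0) (lam l) * loewnerAR A B lam qr l


lemma phi_key {n : ℕ} (A0 : Matrix (Fin n) (Fin n) ℂ) (a b : ℂ)
    (ha : IsUnit (a • (1 : Matrix (Fin n) (Fin n) ℂ) - A0))
    (hb : IsUnit (b • (1 : Matrix (Fin n) (Fin n) ℂ) - A0)) :
    (a - b) • (Phi A0 a * A0 * Phi A0 b) = b • Phi A0 b - a • Phi A0 a := by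
  have ha' := (Matrix.isUnit_iff_isUnit_det _).mp ha
  have hb' := (Matrix.isUnit_iff_isUnit_det _).mp hb
  have h1 : Phi A0 a * (a • (1 : Matrix (Fin n) (Fin n) ℂ) - A0) = 1 :=
    Matrix.nonsing_inv_mul _ ha'
  have h2 : (b • (1 : Matrix (Fin n) (Fin n) ℂ) - A0) * Phi A0 b = 1 :=
    Matrix.mul_nonsing_inv _ hb'
  have e1 : Phi A0 a * ((a • (1 : Matrix (Fin n) (Fin n) ℂ) - A0) * Phi A0 b) = Phi A0 b := by
    rw [← mul_assoc, h1, one_mul]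
  have e2 : Phi A0 a * ((b • (1 : Matrix (Fin n) (Fin n) ℂ) - A0) * Phi A0 b) = Phi A0 a := by
    rw [h2, mul_one]
  have hres : Phi A0 b - Phi A0 a = (a - b) • (Phi A0 a * Phi A0 b) := by
    calc Phi A0 b - Phi A0 a
        = Phi A0 a * ((((a • (1 : Matrix (Fin n) (Fin n) ℂ) - A0))
            - ((b • (1 : Matrix (Fin n) (Fin n) ℂ) - A0))) * Phi A0 b) := by
          rw [Matrix.sub_mul, Matrix.mul_sub, e1, e2]
      _ = (a - b) • (Phi A0 a * Phi A0 b) := by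
          have h : (a • (1 : Matrix (Fin n) (Fin n) ℂ) - A0)
              - (b • (1 : Matrix (Fin n) (Fin n) ℂ) - A0) = (a - b) • 1 := by
            rw [sub_smul]; abel
          rw [h, Matrix.smul_mul, Matrix.mul_smul, Matrix.one_mul]
  have hA : Phi A0 a * A0 = a • Phi A0 a - 1 := by
    have h := h1
    rw [Matrix.mul_sub, Matrix.mul_smul, mul_one] at h
    linear_combination (norm := module) -h
  rw [hA, Matrix.sub_mul, one_mul, Matrix.smul_mul]
  linear_combination (norm := module) (-a) • hres

theorem stmt_9 {n np N : ℕ} (A : Fin (np + 1) → Matrix (Fin n) (Fin n) ℂ)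
    (C : Matrix (Fin 1) (Fin n) ℂ) (B : Matrix (Fin n) (Fin 1) ℂ)
    (μ lam : ℕ → ℂ) (ql qr : ℕ → Fin np)
    (hμ : ∀ k ≤ N, IsUnit (μ k • (1 : Matrix (Fin n) (Fin n) ℂ) - A 0))
    (hlam : ∀ l ≤ N, IsUnit (lam l • (1 : Matrix (Fin n) (Fin n) ℂ) - A 0))
    (O : Matrix (Fin (N + 1)) (Fin n) ℂ) (R : Matrix (Fin n) (Fin (N + 1)) ℂ)
    (hO : ∀ (k : Fin (N + 1)) (j : Fin n),
      O k j = (loewnerOA A C μ ql k * Phi (A 0) (μ k)) 0 j)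
    (hR : ∀ (j : Fin n) (l : Fin (N + 1)),
      R j l = (Phi (A 0) (lam l) * loewnerAR A B lam qr l) j 0)
    :
    ∀ (k l : Fin (N + 1)), μ k ≠ lam l →
      (O * A 0 * R) k l =
        -((μ k * (loewnerOA A C μ ql k * Phi (A 0) (μ k) * loewnerAR A B lam qr l) 0 0 -
           lam l * (loewnerOA A C μ ql k * Phi (A 0) (lam l) * loewnerAR A B lam qr l) 0 0) /
          (μ k - lam l)) := by
  intro k l hne
  set a := loewnerOA A C μ ql k with ha
  set b := loewnerAR A B lam qr l with hb
  set P := Phi (A 0) (μ k) with hP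
  set Q := Phi (A 0) (lam l) with hQ
  have step : (O * A 0 * R) k l = (a * P * A 0 * (Q * b)) 0 0 := by
    simp only [Matrix.mul_apply, hO, hR]
    rfl
  rw [step]
  have hM : P * A 0 * Q = (μ k - lam l)⁻¹ • (lam l • Q - μ k • P) := by
    have hk := phi_key (A 0) (μ k) (lam l) (hμ k k.is_le) (hlam l l.is_le)
    rw [← hk, smul_smul, inv_mul_cancel₀ (sub_ne_zero.mpr hne), one_smul]
  have assoc : a * P * A 0 * (Q * b) = a * (P * A 0 * Q) * b := by
    simp only [Matrix.mul_assoc]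
  rw [assoc, hM]
  have expand : a * ((μ k - lam l)⁻¹ • (lam l • Q - μ k • P)) * b
      = (μ k - lam l)⁻¹ • (lam l • (a * Q * b) - μ k • (a * P * b)) := by
    simp only [Matrix.mul_smul, Matrix.smul_mul, Matrix.mul_sub, Matrix.sub_mul]
  rw [expand]
  simp only [Matrix.smul_apply, Matrix.sub_apply, smul_eq_mul]
  field_simp
  ring
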